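/- Let M be a 2×2 integer matrix with det M = 1 having 1 (respectively −1) as a double eigenvalue, i.e., having characteristic polynomial (x−1)² (respectively (x+1)²). Then there exist a 2×2 integer matrix P with det P = 1 and an integer t such that P⁻¹MP = T_t (respectively P⁻¹MP = −T_t), where T_t is the matrix with rows (1, t) and (0, 1). -/

import Mathlib

open Matrix Polynomial

private lemma aux_conj (a b c d : ℤ) (hdet' : a * d - b * c = 1) (htr' : a + d = 2) :
    ∃ (P : Matrix (Fin 2) (Fin 2) ℤ) (t : ℤ),
      P.det = 1 ∧ P⁻¹ * !![a, b; c, d] * P = !![1, t; 0, 1] := by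
  by_cases hg0 : Int.gcd (a - 1) c = 0
  · obtain ⟨h1, h2⟩ := Int.gcd_eq_zero_iff.mp hg0
    have ha1 : a = 1 := by linarith
    have hd1 : d = 1 := by linarith
    refine ⟨1, b, by simp, ?_⟩
    have hinv : (1 : Matrix (Fin 2) (Fin 2) ℤ)⁻¹ = 1 := Matrix.inv_eq_right_inv (by simp)
    rw [hinv, Matrix.one_mul, Matrix.mul_one, ha1, h2, hd1]
  · have key : ∃ v1 v2 : ℤ, IsCoprime v1 v2 ∧ a * v1 + b * v2 = v1 ∧ c * v1 + d * v2 = v2 := by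
      refine ⟨(a - 1) / (Int.gcd (a - 1) c : ℤ), c / (Int.gcd (a - 1) c : ℤ), ?_, ?_, ?_⟩
      · rw [Int.isCoprime_iff_gcd_eq_one]
        exact Int.gcd_div_gcd_div_gcd (Nat.pos_of_ne_zero hg0)
      all_goals {
        have hg : (Int.gcd (a - 1) c : ℤ) ≠ 0 := by exact_mod_cast hg0
        have hv1 : (Int.gcd (a - 1) c : ℤ) * ((a - 1) / (Int.gcd (a - 1) c : ℤ)) = a - 1 :=
          Int.mul_ediv_cancel' (Int.gcd_dvd_left _ _)
        have hv2 : (Int.gcd (a - 1) c : ℤ) * (c / (Int.gcd (a - 1) c : ℤ)) = c :=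
          Int.mul_ediv_cancel' (Int.gcd_dvd_right _ _)
        apply mul_left_cancel₀ hg
        first
          | linear_combination (a - 1) * hv1 + b * hv2 - hdet' + a * htr'
          | linear_combination c * hv1 + (d - 1) * hv2 + c * htr' }
    obtain ⟨v1, v2, hcop, h1, h2⟩ := key
    obtain ⟨u, w, huw⟩ := hcop
    refine ⟨!![v1, -w; v2, u], (u * a + w * c) * (-w) + (u * b + w * d) * u, ?_, ?_⟩
    · rw [Matrix.det_fin_two_of]; linear_combination huw
    · have hPinv : (!![v1, -w; v2, u] : Matrix (Fin 2) (Fin 2) ℤ)⁻¹ = !![u, w; -v2, v1] := by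
        apply Matrix.inv_eq_right_inv
        ext i j
        fin_cases i <;> fin_cases j <;> simp [Matrix.mul_apply, Fin.sum_univ_two]
        · linear_combination huw
        · ring
        · ring
        · linear_combination huw
      rw [hPinv]
      ext i j
      fin_cases i <;> fin_cases j <;> simp [Matrix.mul_apply, Fin.sum_univ_two]
      · linear_combination u * h1 + w * h2 + huw
      · linear_combination (-v2) * h1 + v1 * h2
      · linear_combination (-u) * h1 + (-w) * h2 + huw + (u * v1 + w * v2) * htr'

private lemma trace_of_charpoly (M : Matrix (Fin 2) (Fin 2) ℤ) (s : ℤ)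
    (h : M.charpoly = (X - C s) ^ 2) : M.trace = 2 * s := by
  have h₁ : M.trace = -M.charpoly.coeff 1 := by
    have := Matrix.trace_eq_neg_charpoly_coeff M
    simpa using this
  have h₂ : ((X - C s : ℤ[X]) ^ 2).coeff 1 = -(2 * s) := by
    have e1 : ((X:ℤ[X]) - C s)^2 = X^2 - C (2*s) * X + C (s*s) := by
      rw [C_mul, C_mul, map_ofNat]; ring
    rw [e1, coeff_add, coeff_sub, coeff_C_mul, coeff_X_one, coeff_X_pow, coeff_C]
    norm_num
  rw [h₁, h, h₂, neg_neg]

/-- A modular matrix (`2×2` integer matrix of determinant `1`) with `1`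
(resp. `-1`) as a double eigenvalue is conjugate, by a modular matrix, to `T_t = !![1,t;0,1]`
(resp. to `-T_t`) for some integer `t`. -/
theorem modular_double_eigenvalue_conjugate
    (M : Matrix (Fin 2) (Fin 2) ℤ) (hdet : M.det = 1) :
    (M.charpoly = (X - 1) ^ 2 →
      ∃ (P : Matrix (Fin 2) (Fin 2) ℤ) (t : ℤ),
        P.det = 1 ∧ P⁻¹ * M * P = !![1, t; 0, 1]) ∧
    (M.charpoly = (X + 1) ^ 2 →
      ∃ (P : Matrix (Fin 2) (Fin 2) ℤ) (t : ℤ),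
        P.det = 1 ∧ P⁻¹ * M * P = -(!![1, t; 0, 1])) := by
  have hdet' : M 0 0 * M 1 1 - M 0 1 * M 1 0 = 1 := by
    rw [Matrix.det_fin_two] at hdet; exact hdet
  constructor
  · intro hch
    have htr : M.trace = 2 := by
      have := trace_of_charpoly M 1 (by simpa using hch)
      simpa using this
    have htr' : M 0 0 + M 1 1 = 2 := by rw [Matrix.trace_fin_two] at htr; exact htr
    obtain ⟨P, t, hP, hconj⟩ := aux_conj (M 0 0) (M 0 1) (M 1 0) (M 1 1) hdet' htr'
    refine ⟨P, t, hP, ?_⟩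
    rw [Matrix.eta_fin_two M]
    exact hconj
  · intro hch
    have htr : M.trace = -2 := by
      have := trace_of_charpoly M (-1) (by simpa [sub_neg_eq_add] using hch)
      simpa using this
    have htr' : M 0 0 + M 1 1 = -2 := by rw [Matrix.trace_fin_two] at htr; exact htr
    obtain ⟨P, t, hP, hconj⟩ := aux_conj (-(M 0 0)) (-(M 0 1)) (-(M 1 0)) (-(M 1 1))
      (by linear_combination hdet') (by linarith)
    refine ⟨P, t, hP, ?_⟩
    have hNM : -M = !![-(M 0 0), -(M 0 1); -(M 1 0), -(M 1 1)] := by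
      have := Matrix.eta_fin_two (-M)
      simpa using this
    have hkey : P⁻¹ * (-M) * P = !![1, t; 0, 1] := by rw [hNM]; exact hconj
    have : -(P⁻¹ * (-M) * P) = -(!![1, t; 0, 1]) := by rw [hkey]
    rw [← this, mul_neg, neg_mul, neg_neg]
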